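/- Let E be a finite-dimensional real inner product space, K ⊆ E a linear subspace with orthogonal projection proj_K, and f : E → ℝ a differentiable function whose gradient is Lipschitz with constant L > 0 and which is strongly convex with constant μ, 0 < μ ≤ L. Let (Ω, ℱ, ℙ) be a probability space, (λ_k)_{k∈ℕ} positive stepsizes, σ ≥ 0, and let x* ∈ E satisfy x* = proj_K(x* − λ_k ∇f(x*)) for every k. Let (X_k)_{k∈ℕ} and (G_k)_{k∈ℕ} be sequences of measurable maps Ω → E such that for all k: X_{k+1}(ω) = proj_K(X_k(ω) − λ_k G_k(ω)) for ℙ-a.e. ω, the functions ω ↦ ‖X_k(ω) − x*‖ and ω ↦ ‖G_k(ω) − ∇f(X_k(ω))‖ are integrable, and ∫ ‖G_k − ∇f(X_k)‖ dℙ ≤ σ. Then for every k, ∫ ‖X_{k+1} − x*‖ dℙ ≤ (∏_{t=0}^{k} ζ_t)·∫ ‖X_0 − x*‖ dℙ + σ·∑_{h=0}^{k} λ_h · ∏_{j=h+1}^{k} ζ_j, where ζ_t = max{|1 − λ_t L|, |1 − λ_t μ|} (and an empty product equals 1). -/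

import Mathlib

open MeasureTheory

open Filter Topology

local notation "⟪" x ", " y "⟫" => @inner ℝ _ _ x y

section aux
variable {E : Type*} [NormedAddCommGroup E] [InnerProductSpace ℝ E] [CompleteSpace E]

lemma line_hasDerivAt (f : E → ℝ) (hdiff : Differentiable ℝ f) (x d : E) (t : ℝ) :
    HasDerivAt (fun s : ℝ => f (x + s • d)) ⟪gradient f (x + t • d), d⟫ t := by
  have h1 : HasDerivAt (fun s : ℝ => x + s • d) d t := by
    simpa using ((hasDerivAt_id t).smul_const d).const_add x
  have h2 := hasGradientAt_iff_hasFDerivAt.mp (hdiff (x + t • d)).hasGradientAt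
  have h3 := h2.comp_hasDerivAt t h1
  simpa [InnerProductSpace.toDual_apply_apply, Function.comp_def] using h3

end aux
section aux2
variable {E : Type*} [NormedAddCommGroup E] [InnerProductSpace ℝ E] [CompleteSpace E]

lemma descent_lemma (f : E → ℝ) (hdiff : Differentiable ℝ f) (L : ℝ) (hL : 0 ≤ L)
    (hlip : ∀ x y : E, ‖gradient f x - gradient f y‖ ≤ L * ‖x - y‖) (x y : E) :
    f y ≤ f x + ⟪gradient f x, y - x⟫ + L / 2 * ‖y - x‖ ^ 2 := by
  set d := y - x with hd
  set F : ℝ → ℝ := fun t => f x + t * ⟪gradient f x, d⟫ + L / 2 * t ^ 2 * ‖d‖ ^ 2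
      - f (x + t • d) with hF
  have hFd : ∀ t : ℝ, HasDerivAt F
      (⟪gradient f x, d⟫ + L * t * ‖d‖ ^ 2 - ⟪gradient f (x + t • d), d⟫) t := by
    intro t
    have h1 := line_hasDerivAt f hdiff x d t
    have h2 : HasDerivAt (fun t : ℝ => f x + t * ⟪gradient f x, d⟫ + L / 2 * t ^ 2 * ‖d‖ ^ 2)
        (⟪gradient f x, d⟫ + L * t * ‖d‖ ^ 2) t := by
      have ha : HasDerivAt (fun t : ℝ => t * ⟪gradient f x, d⟫) ⟪gradient f x, d⟫ t := by
        simpa using (hasDerivAt_id t).mul_const ⟪gradient f x, d⟫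
      have hb : HasDerivAt (fun t : ℝ => L / 2 * t ^ 2 * ‖d‖ ^ 2) (L * t * ‖d‖ ^ 2) t := by
        have := ((hasDerivAt_pow 2 t).const_mul (L / 2)).mul_const (‖d‖ ^ 2)
        exact this.congr_deriv (by push_cast; ring)
      exact ((ha.const_add (f x)).add hb)
    exact h2.sub h1
  have hmono : MonotoneOn F (Set.Icc (0:ℝ) 1) := by
    apply monotoneOn_of_deriv_nonneg (convex_Icc 0 1)
    · exact (Continuous.continuousOn (by
        have : Continuous F := by
          apply Continuous.sub
          · continuity
          · exact (hdiff.continuous).comp (by continuity)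
        exact this))
    · intro t _
      exact ((hFd t).differentiableAt).differentiableWithinAt
    · intro t ht
      rw [interior_Icc] at ht
      rw [(hFd t).deriv]
      have hineq : ⟪gradient f x - gradient f (x + t • d), d⟫ ≥ - (L * t * ‖d‖ ^ 2) := by
        have h1 : |⟪gradient f x - gradient f (x + t • d), d⟫| ≤
            ‖gradient f x - gradient f (x + t • d)‖ * ‖d‖ := abs_real_inner_le_norm _ _
        have h2 : ‖gradient f x - gradient f (x + t • d)‖ ≤ L * (t * ‖d‖) := by
          have := hlip x (x + t • d)
          have he : ‖x - (x + t • d)‖ = t * ‖d‖ := by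
            rw [show x - (x + t • d) = -(t • d) by abel, norm_neg, norm_smul,
              Real.norm_eq_abs, abs_of_pos ht.1]
          rw [he] at this; exact this
        nlinarith [abs_nonneg ⟪gradient f x - gradient f (x + t • d), d⟫, norm_nonneg d,
          neg_abs_le ⟪gradient f x - gradient f (x + t • d), d⟫,
          mul_le_mul_of_nonneg_right h2 (norm_nonneg d)]
      have : ⟪gradient f x, d⟫ - ⟪gradient f (x + t • d), d⟫ =
          ⟪gradient f x - gradient f (x + t • d), d⟫ := by rw [inner_sub_left]
      nlinarith [hineq]
  have h01 : F 0 ≤ F 1 := hmono (by norm_num) (by norm_num) (by norm_num)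
  simp only [hF] at h01
  simp only [zero_smul, add_zero, one_smul] at h01
  have hxy : x + d = y := by rw [hd]; abel
  rw [hxy] at h01
  nlinarith [h01]

lemma convex_first_order (h : E → ℝ) (hdiff : Differentiable ℝ h)
    (hconv : ConvexOn ℝ Set.univ h) (x y : E) :
    h x + ⟪gradient h x, y - x⟫ ≤ h y := by
  set d := y - x with hd
  have hder : HasDerivAt (fun s : ℝ => h (x + s • d)) ⟪gradient h x, d⟫ 0 := by
    have := line_hasDerivAt h hdiff x d 0
    simpa using this
  have hslope : Tendsto (slope (fun s : ℝ => h (x + s • d)) 0) (𝓝[>] 0)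
      (𝓝 ⟪gradient h x, d⟫) :=
    (hasDerivAt_iff_tendsto_slope.mp hder).mono_left
      (nhdsWithin_mono 0 (fun t ht => ne_of_gt ht))
  have hbound : ∀ᶠ t in 𝓝[>] (0:ℝ), slope (fun s : ℝ => h (x + s • d)) 0 t ≤ h y - h x := by
    filter_upwards [Ioc_mem_nhdsGT (by norm_num : (0:ℝ) < 1)] with t ht
    have hcomb := hconv.2 (Set.mem_univ x) (Set.mem_univ y)
      (by linarith [ht.1, ht.2] : (0:ℝ) ≤ 1 - t) (le_of_lt ht.1) (by ring)
    have he : (1 - t) • x + t • y = x + t • d := by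
      rw [hd]; module
    rw [he] at hcomb
    rw [slope_def_field]
    simp only [sub_zero, zero_smul, add_zero]
    rw [div_le_iff₀ ht.1]
    simp only [smul_eq_mul] at hcomb
    nlinarith [hcomb]
  have := le_of_tendsto hslope hbound
  linarith

end aux2
section aux3
variable {E : Type*} [NormedAddCommGroup E] [InnerProductSpace ℝ E] [CompleteSpace E]

lemma grad_aux (f : E → ℝ) (hdiff : Differentiable ℝ f) (μ : ℝ) (z : E) :
    HasGradientAt (fun w => f w - μ / 2 * ‖w‖ ^ 2) (gradient f z - μ • z) z := by
  rw [hasGradientAt_iff_hasFDerivAt]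
  have h1 : HasFDerivAt f (InnerProductSpace.toDual ℝ E (gradient f z)) z :=
    hasGradientAt_iff_hasFDerivAt.mp (hdiff z).hasGradientAt
  have h2 : HasFDerivAt (fun w : E => ‖w‖ ^ 2) (2 • (innerSL ℝ z)) z := by
    simpa using (hasFDerivAt_id z).norm_sq
  have h3 := h1.sub ((h2.const_smul (μ / 2)))
  refine h3.congr_fderiv ?_
  ext v
  simp [InnerProductSpace.toDual_apply_apply, inner_sub_left, inner_smul_left, two_smul,
    inner_add_left]
  ring

lemma coco_abstract (h : E → ℝ) (gh : E → E) (L' : ℝ) (hL' : 0 ≤ L')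
    (hfo : ∀ a b : E, h a + ⟪gh a, b - a⟫ ≤ h b)
    (hdesc : ∀ a b : E, h b ≤ h a + ⟪gh a, b - a⟫ + L' / 2 * ‖b - a‖ ^ 2)
    (x y : E) : ‖gh y - gh x‖ ^ 2 ≤ L' * ⟪gh y - gh x, y - x⟫ := by
  have key : ∀ (t : ℝ) (a b : E), t * ‖gh b - gh a‖ ^ 2 ≤
      (h b - h a - ⟪gh a, b - a⟫) + L' / 2 * t ^ 2 * ‖gh b - gh a‖ ^ 2 := by
    intro t a b
    have h1 := hfo a (b - t • (gh b - gh a))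
    have h2 := hdesc b (b - t • (gh b - gh a))
    have e1 : ⟪gh a, b - t • (gh b - gh a) - a⟫ =
        ⟪gh a, b - a⟫ - t * ⟪gh a, gh b - gh a⟫ := by
      rw [show b - t • (gh b - gh a) - a = (b - a) - t • (gh b - gh a) by abel,
        inner_sub_right, inner_smul_right]
    have e2 : ⟪gh b, b - t • (gh b - gh a) - b⟫ = -(t * ⟪gh b, gh b - gh a⟫) := by
      rw [show b - t • (gh b - gh a) - b = -(t • (gh b - gh a)) by abel,
        inner_neg_right, inner_smul_right]
    have e3 : ‖b - t • (gh b - gh a) - b‖ ^ 2 = t ^ 2 * ‖gh b - gh a‖ ^ 2 := by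
      rw [show b - t • (gh b - gh a) - b = -(t • (gh b - gh a)) by abel, norm_neg,
        norm_smul, Real.norm_eq_abs, mul_pow, sq_abs]
    have e5 : t * ⟪gh b, gh b - gh a⟫ - t * ⟪gh a, gh b - gh a⟫ = t * ‖gh b - gh a‖ ^ 2 := by
      rw [← mul_sub, ← inner_sub_left, real_inner_self_eq_norm_sq]
    rw [e1] at h1
    rw [e2, e3] at h2
    linarith [h1, h2, e5]
  have kxy := key
  have hT : ∀ t : ℝ, 2 * t * ‖gh y - gh x‖ ^ 2 - L' * t ^ 2 * ‖gh y - gh x‖ ^ 2 ≤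
      ⟪gh y - gh x, y - x⟫ := by
    intro t
    have k1 := key t x y
    have k2 := key t y x
    have hsym : ‖gh x - gh y‖ = ‖gh y - gh x‖ := by
      rw [← norm_neg]; congr 1; abel
    rw [hsym] at k2
    have hAB : (h y - h x - ⟪gh x, y - x⟫) + (h x - h y - ⟪gh y, x - y⟫)
        = ⟪gh y - gh x, y - x⟫ := by
      rw [inner_sub_left, show (x - y : E) = -(y - x) by abel, inner_neg_right]
      ring
    linarith [k1, k2, hAB]
  rcases eq_or_lt_of_le hL' with hEq | hLt
  · have hz : ‖gh y - gh x‖ ^ 2 = 0 := by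
      by_contra hne
      have hpos : 0 < ‖gh y - gh x‖ ^ 2 := lt_of_le_of_ne (by positivity) (Ne.symm hne)
      have ht := hT ((⟪gh y - gh x, y - x⟫ + 1) / (2 * ‖gh y - gh x‖ ^ 2))
      rw [← hEq] at ht
      simp only [zero_mul, sub_zero] at ht
      have he : 2 * ((⟪gh y - gh x, y - x⟫ + 1) / (2 * ‖gh y - gh x‖ ^ 2)) *
          ‖gh y - gh x‖ ^ 2 = ⟪gh y - gh x, y - x⟫ + 1 := by
        have hn : ‖gh y - gh x‖ ≠ 0 := fun h0 => hne (by rw [h0]; ring)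
        field_simp
      rw [he] at ht
      linarith
    rw [hz, ← hEq]
    simp
  · have ht := hT (1 / L')
    have he : 2 * (1 / L') * ‖gh y - gh x‖ ^ 2 - L' * (1 / L') ^ 2 * ‖gh y - gh x‖ ^ 2
        = (1 / L') * ‖gh y - gh x‖ ^ 2 := by
      field_simp
      ring
    rw [he] at ht
    calc ‖gh y - gh x‖ ^ 2 = L' * ((1 / L') * ‖gh y - gh x‖ ^ 2) := by field_simp
      _ ≤ L' * ⟪gh y - gh x, y - x⟫ := mul_le_mul_of_nonneg_left ht (le_of_lt hLt)

lemma coco (f : E → ℝ) (hdiff : Differentiable ℝ f) (L μ : ℝ) (hL : 0 < L) (hμ : 0 < μ)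
    (hμL : μ ≤ L)
    (hlip : ∀ x y : E, ‖gradient f x - gradient f y‖ ≤ L * ‖x - y‖)
    (hsc : ConvexOn ℝ Set.univ fun x => f x - μ / 2 * ‖x‖ ^ 2) (x y : E) :
    ‖gradient f x - gradient f y‖ ^ 2 + μ * L * ‖x - y‖ ^ 2 ≤
      (L + μ) * ⟪gradient f x - gradient f y, x - y⟫ := by
  have hdh : Differentiable ℝ (fun w => f w - μ / 2 * ‖w‖ ^ 2) := fun z =>
    ((grad_aux f hdiff μ z).differentiableAt)
  have hgrad : ∀ z, gradient (fun w => f w - μ / 2 * ‖w‖ ^ 2) z = gradient f z - μ • z :=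
    fun z => (grad_aux f hdiff μ z).gradient
  have hfo : ∀ a b : E, (f a - μ / 2 * ‖a‖ ^ 2) + ⟪gradient f a - μ • a, b - a⟫ ≤
      f b - μ / 2 * ‖b‖ ^ 2 := by
    intro a b
    have := convex_first_order _ hdh hsc a b
    rwa [hgrad] at this
  have hdesc : ∀ a b : E, f b - μ / 2 * ‖b‖ ^ 2 ≤ (f a - μ / 2 * ‖a‖ ^ 2) +
      ⟪gradient f a - μ • a, b - a⟫ + (L - μ) / 2 * ‖b - a‖ ^ 2 := by
    intro a b
    have hf := descent_lemma f hdiff L (le_of_lt hL) hlip a b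
    have hq : μ / 2 * ‖b‖ ^ 2 - μ / 2 * ‖a‖ ^ 2 - μ * ⟪a, b - a⟫ = μ / 2 * ‖b - a‖ ^ 2 := by
      have h1 := norm_sub_sq_real b a
      rw [inner_sub_right]
      nlinarith [h1, real_inner_comm a b, real_inner_self_eq_norm_sq a]
    have hip : ⟪gradient f a - μ • a, b - a⟫ = ⟪gradient f a, b - a⟫ - μ * ⟪a, b - a⟫ := by
      rw [inner_sub_left, inner_smul_left]; norm_num
    rw [hip]
    nlinarith [hf, hq]
  have hcc := coco_abstract (fun w => f w - μ / 2 * ‖w‖ ^ 2) (fun z => gradient f z - μ • z)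
    (L - μ) (by linarith) hfo hdesc x y
  have hd1 : (gradient f y - μ • y) - (gradient f x - μ • x)
      = -((gradient f x - gradient f y) - μ • (x - y)) := by
    rw [smul_sub]; abel
  simp only [hd1] at hcc
  rw [norm_neg, show (y - x : E) = -(x - y) by abel, inner_neg_neg] at hcc
  have hexp : ‖(gradient f x - gradient f y) - μ • (x - y)‖ ^ 2 =
      ‖gradient f x - gradient f y‖ ^ 2 - 2 * μ * ⟪gradient f x - gradient f y, x - y⟫
        + μ ^ 2 * ‖x - y‖ ^ 2 := by
    rw [norm_sub_sq_real, inner_smul_right, norm_smul, Real.norm_eq_abs, mul_pow, sq_abs]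
    ring
  have hexp2 : ⟪(gradient f x - gradient f y) - μ • (x - y), x - y⟫ =
      ⟪gradient f x - gradient f y, x - y⟫ - μ * ‖x - y‖ ^ 2 := by
    rw [inner_sub_left, inner_smul_left, real_inner_self_eq_norm_sq]; norm_num
  rw [hexp, hexp2] at hcc
  nlinarith [hcc]

end aux3
section aux4
variable {E : Type*} [NormedAddCommGroup E] [InnerProductSpace ℝ E] [CompleteSpace E]

lemma contraction (f : E → ℝ) (hdiff : Differentiable ℝ f) (L μ : ℝ) (hL : 0 < L)
    (hμ : 0 < μ) (hμL : μ ≤ L)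
    (hlip : ∀ x y : E, ‖gradient f x - gradient f y‖ ≤ L * ‖x - y‖)
    (hsc : ConvexOn ℝ Set.univ fun x => f x - μ / 2 * ‖x‖ ^ 2)
    (lam : ℝ) (hlam : 0 < lam) (x y : E) :
    ‖(x - lam • gradient f x) - (y - lam • gradient f y)‖ ≤
      max |1 - lam * L| |1 - lam * μ| * ‖x - y‖ := by
  have hkey := coco f hdiff L μ hL hμ hμL hlip hsc x y
  have hipn := real_inner_le_norm (gradient f x - gradient f y) (x - y)
  have hs := hlip x y
  have hLμpos : (0:ℝ) < L + μ := by linarith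
  have hrw : (x - lam • gradient f x) - (y - lam • gradient f y)
      = (x - y) - lam • (gradient f x - gradient f y) := by
    rw [smul_sub]; abel
  rw [hrw]
  have hnormsq : ‖(x - y) - lam • (gradient f x - gradient f y)‖ ^ 2 =
      ‖x - y‖ ^ 2 - 2 * lam * ⟪gradient f x - gradient f y, x - y⟫
        + lam ^ 2 * ‖gradient f x - gradient f y‖ ^ 2 := by
    rw [norm_sub_sq_real, inner_smul_right, norm_smul, Real.norm_eq_abs, mul_pow, sq_abs,
      real_inner_comm]
    ring
  have hζ0 : 0 ≤ max |1 - lam * L| |1 - lam * μ| :=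
    le_trans (abs_nonneg _) (le_max_left _ _)
  have hfact : (μ * ‖x - y‖ - ‖gradient f x - gradient f y‖) *
      (L * ‖x - y‖ - ‖gradient f x - gradient f y‖) ≤ 0 := by
    nlinarith [hkey, mul_le_mul_of_nonneg_left hipn hLμpos.le]
  have hs2 : ‖gradient f x - gradient f y‖ ^ 2 ≥ μ ^ 2 * ‖x - y‖ ^ 2 := by
    rcases eq_or_lt_of_le hs with he | hlt
    · rw [he]
      nlinarith [mul_nonneg (sub_nonneg.mpr hμL) hLμpos.le, sq_nonneg ‖x - y‖]
    · have hms : μ * ‖x - y‖ - ‖gradient f x - gradient f y‖ ≤ 0 := by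
        nlinarith [hfact, hlt]
      nlinarith [hms, norm_nonneg (x - y), norm_nonneg (gradient f x - gradient f y),
        mul_nonneg hμ.le (norm_nonneg (x - y))]
  have hs3 : ‖gradient f x - gradient f y‖ ^ 2 ≤ L ^ 2 * ‖x - y‖ ^ 2 := by
    nlinarith [hs, norm_nonneg (gradient f x - gradient f y), norm_nonneg (x - y)]
  have hsq : ‖(x - y) - lam • (gradient f x - gradient f y)‖ ^ 2 ≤
      (max |1 - lam * L| |1 - lam * μ| * ‖x - y‖) ^ 2 := by
    rw [hnormsq]
    rcases le_or_gt (lam * (L + μ)) 2 with hcase | hcase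
    · have h1 : (1 - lam * μ) ^ 2 ≤ (max |1 - lam * L| |1 - lam * μ|) ^ 2 := by
        rw [← sq_abs (1 - lam * μ)]
        exact pow_le_pow_left₀ (abs_nonneg _) (le_max_right _ _) 2
      have hmain : ‖x - y‖ ^ 2 - 2 * lam * ⟪gradient f x - gradient f y, x - y⟫
          + lam ^ 2 * ‖gradient f x - gradient f y‖ ^ 2 ≤ (1 - lam * μ) ^ 2 * ‖x - y‖ ^ 2 := by
        have t1 : 0 ≤ lam * ((L + μ) * ⟪gradient f x - gradient f y, x - y⟫
            - (‖gradient f x - gradient f y‖ ^ 2 + μ * L * ‖x - y‖ ^ 2)) :=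
          mul_nonneg hlam.le (by linarith [hkey])
        have t2 : 0 ≤ (lam * (2 - lam * (L + μ))) *
            (‖gradient f x - gradient f y‖ ^ 2 - μ ^ 2 * ‖x - y‖ ^ 2) :=
          mul_nonneg (mul_nonneg hlam.le (by linarith)) (by linarith [hs2])
        refine le_of_mul_le_mul_left ?_ hLμpos
        linarith [t1, t2]
      calc _ ≤ (1 - lam * μ) ^ 2 * ‖x - y‖ ^ 2 := hmain
        _ ≤ (max |1 - lam * L| |1 - lam * μ|) ^ 2 * ‖x - y‖ ^ 2 :=
            mul_le_mul_of_nonneg_right h1 (sq_nonneg _)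
        _ = (max |1 - lam * L| |1 - lam * μ| * ‖x - y‖) ^ 2 := by ring
    · have h1 : (1 - lam * L) ^ 2 ≤ (max |1 - lam * L| |1 - lam * μ|) ^ 2 := by
        rw [← sq_abs (1 - lam * L)]
        exact pow_le_pow_left₀ (abs_nonneg _) (le_max_left _ _) 2
      have hmain : ‖x - y‖ ^ 2 - 2 * lam * ⟪gradient f x - gradient f y, x - y⟫
          + lam ^ 2 * ‖gradient f x - gradient f y‖ ^ 2 ≤ (1 - lam * L) ^ 2 * ‖x - y‖ ^ 2 := by
        have t1 : 0 ≤ lam * ((L + μ) * ⟪gradient f x - gradient f y, x - y⟫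
            - (‖gradient f x - gradient f y‖ ^ 2 + μ * L * ‖x - y‖ ^ 2)) :=
          mul_nonneg hlam.le (by linarith [hkey])
        have t2 : 0 ≤ (lam * (lam * (L + μ) - 2)) *
            (L ^ 2 * ‖x - y‖ ^ 2 - ‖gradient f x - gradient f y‖ ^ 2) :=
          mul_nonneg (mul_nonneg hlam.le (by linarith)) (by linarith [hs3])
        refine le_of_mul_le_mul_left ?_ hLμpos
        linarith [t1, t2]
      calc _ ≤ (1 - lam * L) ^ 2 * ‖x - y‖ ^ 2 := hmain
        _ ≤ (max |1 - lam * L| |1 - lam * μ|) ^ 2 * ‖x - y‖ ^ 2 :=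
            mul_le_mul_of_nonneg_right h1 (sq_nonneg _)
        _ = (max |1 - lam * L| |1 - lam * μ| * ‖x - y‖) ^ 2 := by ring
  have h2 := Real.sqrt_le_sqrt hsq
  rwa [Real.sqrt_sq (norm_nonneg _), Real.sqrt_sq (mul_nonneg hζ0 (norm_nonneg _))] at h2

end aux4
open MeasureTheory

lemma proj_nonexpansive {E : Type*} [NormedAddCommGroup E] [InnerProductSpace ℝ E]
    [FiniteDimensional ℝ E] (K : Submodule ℝ E) (v w : E) :
    ‖(K.orthogonalProjection v : E) - (K.orthogonalProjection w : E)‖ ≤ ‖v - w‖ := by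
  have h1 : (K.orthogonalProjection v : E) - (K.orthogonalProjection w : E)
      = ((K.orthogonalProjection (v - w) : K) : E) := by
    rw [map_sub]; rfl
  rw [h1]
  calc ‖((K.orthogonalProjection (v - w) : K) : E)‖ = ‖K.orthogonalProjection (v - w)‖ := rfl
    _ ≤ ‖K.orthogonalProjection‖ * ‖v - w‖ := (K.orthogonalProjection).le_opNorm _
    _ ≤ 1 * ‖v - w‖ := by
        exact mul_le_mul_of_nonneg_right (Submodule.orthogonalProjectionOnto_norm_le K) (norm_nonneg _)
    _ = ‖v - w‖ := one_mul _

/-- Main convergence result (Theorem 1): for the inexact projected stochastic gradient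
method `X_{k+1} = proj_K(X_k - λ_k G_k)` a.s., where the stochastic gradient `G_k`
satisfies `∫ ‖G_k - ∇f(X_k)‖ dℙ ≤ σ`, `f` is `L`-smooth and `μ`-strongly convex
(`0 < μ ≤ L`), and `x*` is a fixed point of every projected gradient step, the expected
distance to `x*` satisfies the product-sum bound with per-step contraction factors
`ζ_t = max {|1 - λ_t L|, |1 - λ_t μ|}`. -/
theorem stochastic_projected_gradient_convergence
    {E : Type*} [NormedAddCommGroup E] [InnerProductSpace ℝ E] [FiniteDimensional ℝ E]
    [MeasurableSpace E] [BorelSpace E]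
    (K : Submodule ℝ E)
    (f : E → ℝ) (hdiff : Differentiable ℝ f)
    (L μ : ℝ) (hL : 0 < L) (hμ : 0 < μ) (hμL : μ ≤ L)
    (hlip : ∀ x y : E, ‖gradient f x - gradient f y‖ ≤ L * ‖x - y‖)
    (hsc : ConvexOn ℝ Set.univ fun x => f x - μ / 2 * ‖x‖ ^ 2)
    {Ω : Type*} [MeasurableSpace Ω] (P : Measure Ω) [IsProbabilityMeasure P]
    (lam : ℕ → ℝ) (hlam : ∀ k, 0 < lam k) (σ : ℝ) (hσ : 0 ≤ σ)
    (xstar : E)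
    (hfix : ∀ k, xstar = (K.orthogonalProjection (xstar - lam k • gradient f xstar) : E))
    (X G : ℕ → Ω → E)
    (hXmeas : ∀ k, Measurable (X k)) (hGmeas : ∀ k, Measurable (G k))
    (hupd : ∀ k, ∀ᵐ ω ∂P,
      X (k + 1) ω = (K.orthogonalProjection (X k ω - lam k • G k ω) : E))
    (hintX : ∀ k, Integrable (fun ω => ‖X k ω - xstar‖) P)
    (hintG : ∀ k, Integrable (fun ω => ‖G k ω - gradient f (X k ω)‖) P)
    (hGerr : ∀ k, ∫ ω, ‖G k ω - gradient f (X k ω)‖ ∂P ≤ σ) :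
    ∀ k : ℕ, ∫ ω, ‖X (k + 1) ω - xstar‖ ∂P ≤
      (∏ t ∈ Finset.range (k + 1), max |1 - lam t * L| |1 - lam t * μ|) *
        ∫ ω, ‖X 0 ω - xstar‖ ∂P +
      σ * ∑ h ∈ Finset.range (k + 1),
        lam h * ∏ j ∈ Finset.Icc (h + 1) k, max |1 - lam j * L| |1 - lam j * μ| := by
  set ζ : ℕ → ℝ := fun t => max |1 - lam t * L| |1 - lam t * μ| with hζ
  have hζnn : ∀ t, 0 ≤ ζ t := fun t => le_trans (abs_nonneg _) (le_max_left _ _)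
  -- one-step inequality
  have onestep : ∀ k, ∫ ω, ‖X (k + 1) ω - xstar‖ ∂P ≤
      ζ k * ∫ ω, ‖X k ω - xstar‖ ∂P + lam k * σ := by
    intro k
    have hae : ∀ᵐ ω ∂P, ‖X (k + 1) ω - xstar‖ ≤
        ζ k * ‖X k ω - xstar‖ + lam k * ‖G k ω - gradient f (X k ω)‖ := by
      filter_upwards [hupd k] with ω hω
      have hstep : ‖X (k + 1) ω - xstar‖ ≤
          ‖(X k ω - lam k • G k ω) - (xstar - lam k • gradient f xstar)‖ := by
        rw [hω]
        nth_rewrite 1 [hfix k]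
        exact proj_nonexpansive K _ _
      have hsplit : (X k ω - lam k • G k ω) - (xstar - lam k • gradient f xstar)
          = ((X k ω - lam k • gradient f (X k ω)) - (xstar - lam k • gradient f xstar))
            + (-(lam k • (G k ω - gradient f (X k ω)))) := by
        rw [smul_sub]; abel
      have hcontr := contraction f hdiff L μ hL hμ hμL hlip hsc (lam k) (hlam k)
        (X k ω) xstar
      calc ‖X (k + 1) ω - xstar‖ ≤
          ‖(X k ω - lam k • G k ω) - (xstar - lam k • gradient f xstar)‖ := hstep
        _ ≤ ‖(X k ω - lam k • gradient f (X k ω)) - (xstar - lam k • gradient f xstar)‖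
            + ‖-(lam k • (G k ω - gradient f (X k ω)))‖ := by
              rw [hsplit]; exact norm_add_le _ _
        _ ≤ ζ k * ‖X k ω - xstar‖ + lam k * ‖G k ω - gradient f (X k ω)‖ := by
            refine add_le_add hcontr ?_
            rw [norm_neg, norm_smul, Real.norm_eq_abs, abs_of_pos (hlam k)]
    have hint2 : Integrable (fun ω => ζ k * ‖X k ω - xstar‖
        + lam k * ‖G k ω - gradient f (X k ω)‖) P :=
      ((hintX k).const_mul _).add ((hintG k).const_mul _)
    have h3 := integral_mono_ae (hintX (k + 1)) hint2 hae
    rw [integral_add ((hintX k).const_mul _) ((hintG k).const_mul _),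
      integral_const_mul, integral_const_mul] at h3
    refine h3.trans (add_le_add le_rfl ?_)
    exact mul_le_mul_of_nonneg_left (hGerr k) (hlam k).le
  intro k
  induction k with
  | zero =>
      refine (onestep 0).trans ?_
      rw [Finset.prod_range_one, Finset.sum_range_one,
        Finset.Icc_eq_empty (by omega : ¬ (0 + 1 : ℕ) ≤ 0), Finset.prod_empty]
      ring_nf
      linarith
  | succ n ih =>
      have h1 := onestep (n + 1)
      have h2 : ζ (n + 1) * ∫ ω, ‖X (n + 1) ω - xstar‖ ∂P ≤
          ζ (n + 1) * ((∏ t ∈ Finset.range (n + 1), ζ t) * (∫ ω, ‖X 0 ω - xstar‖ ∂P)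
            + σ * ∑ h ∈ Finset.range (n + 1), lam h * ∏ j ∈ Finset.Icc (h + 1) n, ζ j) :=
        mul_le_mul_of_nonneg_left ih (hζnn (n + 1))
      have hsum : ∑ h ∈ Finset.range (n + 1), lam h * ∏ j ∈ Finset.Icc (h + 1) (n + 1), ζ j
          = (∑ h ∈ Finset.range (n + 1), lam h * ∏ j ∈ Finset.Icc (h + 1) n, ζ j)
            * ζ (n + 1) := by
        rw [Finset.sum_mul]
        refine Finset.sum_congr rfl fun h hh => ?_
        rw [Finset.prod_Icc_succ_top (by have := Finset.mem_range.mp hh; omega : h + 1 ≤ n + 1), ← mul_assoc]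
      rw [Finset.prod_range_succ, Finset.sum_range_succ,
        Finset.Icc_eq_empty (by omega : ¬ (n + 1 + 1 : ℕ) ≤ n + 1), Finset.prod_empty,
        hsum]
      nlinarith [h1, h2]
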